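/- Let J be a semi-infinite open interval (inf J = −∞ or sup J = +∞) and let F, G : J → ℝ be differentiable with derivatives f, g satisfying [F(b)−F(a)]g(αa+βb) = [G(b)−G(a)]f(αa+βb) for all a, b ∈ J, where α, β ∈ (0,1), α+β=1. Let U_f = {x ∈ J : f(x) ≠ 0} and U_g = {x ∈ J : g(x) ≠ 0}. If U_g ≠ ∅ and U_f ∩ U_g = ∅, then U_f = ∅, i.e. f ≡ 0 on J and F is constant. -/

import Mathlib

set_option maxHeartbeats 1000000

open Set Filter

/-- Symmetry of `G` around a point `c` where `f c ≠ 0`, `g c = 0`. -/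
private lemma sym1 (J : Set ℝ) (hray : ∀ t ∈ J, Set.Ici t ⊆ J)
    (α β : ℝ) (hα : 0 < α) (hβ : 0 < β) (hαβ : α + β = 1)
    (F G f g : ℝ → ℝ)
    (heq : ∀ a ∈ J, ∀ b ∈ J,
      (F b - F a) * g (α * a + β * b) = (G b - G a) * f (α * a + β * b))
    (c : ℝ) (hc : c ∈ J) (hgc : g c = 0) (hfc : f c ≠ 0)
    (r : ℝ) (hr : r = α / β ∨ r = β / α)
    (a : ℝ) (ha : a ∈ J) (hac : a ≤ c) :
    G (c + r * (c - a)) = G a := by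
  have hrpos : 0 < r := by rcases hr with hr | hr <;> rw [hr] <;> positivity
  have hbJ : c + r * (c - a) ∈ J :=
    hray c hc (Set.mem_Ici.mpr (by nlinarith))
  rcases hr with hr | hr
  · have hkey := heq a ha (c + r * (c - a)) hbJ
    have hm : α * a + β * (c + r * (c - a)) = c := by
      subst hr
      have e : β * (α / β * (c - a)) = α * (c - a) := by field_simp
      calc α * a + β * (c + α / β * (c - a))
          = α * a + β * c + β * (α / β * (c - a)) := by ring
        _ = α * a + β * c + α * (c - a) := by rw [e]
        _ = c := by linear_combination c * hαβ
    rw [hm, hgc, mul_zero] at hkey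
    rcases mul_eq_zero.mp hkey.symm with h | h
    · linarith [sub_eq_zero.mp h]
    · exact absurd h hfc
  · have hkey := heq (c + r * (c - a)) hbJ a ha
    have hm : α * (c + r * (c - a)) + β * a = c := by
      subst hr
      have e : α * (β / α * (c - a)) = β * (c - a) := by field_simp
      calc α * (c + β / α * (c - a)) + β * a
          = α * c + α * (β / α * (c - a)) + β * a := by ring
        _ = α * c + β * (c - a) + β * a := by rw [e]
        _ = c := by linear_combination c * hαβ
    rw [hm, hgc, mul_zero] at hkey
    rcases mul_eq_zero.mp hkey.symm with h | h
    · linarith [sub_eq_zero.mp h]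
    · exact absurd h hfc

/-- Reflection law for `g` at a center `c` where `f c ≠ 0`, `g c = 0`. -/
private lemma refl1 (J : Set ℝ) (hJo : IsOpen J) (hray : ∀ t ∈ J, Set.Ici t ⊆ J)
    (α β : ℝ) (hα : 0 < α) (hβ : 0 < β) (hαβ : α + β = 1)
    (F G f g : ℝ → ℝ)
    (hG : ∀ x ∈ J, HasDerivAt G (g x) x)
    (heq : ∀ a ∈ J, ∀ b ∈ J,
      (F b - F a) * g (α * a + β * b) = (G b - G a) * f (α * a + β * b))
    (c : ℝ) (hc : c ∈ J) (hgc : g c = 0) (hfc : f c ≠ 0)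
    (r : ℝ) (hr : r = α / β ∨ r = β / α)
    (a : ℝ) (ha : a ∈ J) (hac : a < c) :
    g a = -r * g (c + r * (c - a)) := by
  have hrpos : 0 < r := by rcases hr with hr' | hr' <;> rw [hr'] <;> positivity
  have hψJ : c + r * (c - a) ∈ J := hray c hc (Set.mem_Ici.mpr (by nlinarith))
  have hlin : HasDerivAt (fun x : ℝ => c + r * (c - x)) (-r) a := by
    have h := (hasDerivAt_const a c).add
      ((HasDerivAt.const_sub c (hasDerivAt_id' (x := a))).const_mul r)
    exact h.congr_deriv (by ring)
  have h1 : HasDerivAt (fun x : ℝ => G (c + r * (c - x))) (g (c + r * (c - a)) * (-r)) a :=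
    (hG _ hψJ).comp a hlin
  have h2 : (fun x : ℝ => G (c + r * (c - x))) =ᶠ[nhds a] G := by
    have hmem : J ∩ Set.Iio c ∈ nhds a := (hJo.inter isOpen_Iio).mem_nhds ⟨ha, hac⟩
    filter_upwards [hmem] with x hx
    exact sym1 J hray α β hα hβ hαβ F G f g heq c hc hgc hfc r hr x hx.1 hx.2.le
  have h3 : HasDerivAt G (g (c + r * (c - a)) * (-r)) a := h1.congr_of_eventuallyEq h2.symm
  have h4 := h3.unique (hG a ha)
  linarith [h4]

private lemma core (J : Set ℝ) (hJo : IsOpen J) (hJc : J.OrdConnected)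
    (hray : ∀ t ∈ J, Set.Ici t ⊆ J)
    (α β : ℝ) (hα : 0 < α) (hβ : 0 < β) (hαβ : α + β = 1)
    (F G f g : ℝ → ℝ)
    (hF : ∀ x ∈ J, HasDerivAt F (f x) x) (hG : ∀ x ∈ J, HasDerivAt G (g x) x)
    (heq : ∀ a ∈ J, ∀ b ∈ J,
      (F b - F a) * g (α * a + β * b) = (G b - G a) * f (α * a + β * b))
    (hd : ∀ x ∈ J, f x = 0 ∨ g x = 0)
    (p : ℝ) (hp : p ∈ J) (hgp : g p ≠ 0)
    (q : ℝ) (hq : q ∈ J) (hfq : f q ≠ 0) : False := by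
  have heq' : ∀ a ∈ J, ∀ b ∈ J,
      (G b - G a) * f (α * a + β * b) = (F b - F a) * g (α * a + β * b) :=
    fun a ha b hb => (heq a ha b hb).symm
  -- reflection for g around points of U_f
  have reflG : ∀ c ∈ J, f c ≠ 0 → ∀ r : ℝ, (r = α / β ∨ r = β / α) →
      ∀ a ∈ J, a < c → g a = -r * g (c + r * (c - a)) := by
    intro c hc hfc r hr a ha hac
    exact refl1 J hJo hray α β hα hβ hαβ F G f g hG heq c hc
      ((hd c hc).resolve_left hfc) hfc r hr a ha hac
  -- reflection for f around points of U_g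
  have reflF : ∀ c ∈ J, g c ≠ 0 → ∀ r : ℝ, (r = α / β ∨ r = β / α) →
      ∀ a ∈ J, a < c → f a = -r * f (c + r * (c - a)) := by
    intro c hc hgc r hr a ha hac
    exact refl1 J hJo hray α β hα hβ hαβ G F g f hF heq' c hc
      ((hd c hc).resolve_right hgc) hgc r hr a ha hac
  -- symmetry of G around points of U_f (with ratio r = α/β)
  set r : ℝ := α / β with hrdef
  have hrpos : 0 < r := by rw [hrdef]; positivity
  have symG : ∀ c ∈ J, f c ≠ 0 → ∀ a ∈ J, a ≤ c → G (c + r * (c - a)) = G a := by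
    intro c hc hfc a ha hac
    exact sym1 J hray α β hα hβ hαβ F G f g heq c hc
      ((hd c hc).resolve_left hfc) hfc r (Or.inl rfl) a ha hac
  -- U_f is unbounded above
  obtain ⟨rr, hrr1, hrrd⟩ : ∃ rr : ℝ, 1 ≤ rr ∧ (rr = α / β ∨ rr = β / α) := by
    rcases le_total α β with h | h
    · exact ⟨β / α, (one_le_div hα).mpr h, Or.inr rfl⟩
    · exact ⟨α / β, (one_le_div hβ).mpr h, Or.inl rfl⟩
  have hrrpos : 0 < rr := lt_of_lt_of_le one_pos hrr1
  obtain ⟨q1, p1, hq1J, hfq1, hp1J, hgp1, hlt1⟩ :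
      ∃ q1 p1, q1 ∈ J ∧ f q1 ≠ 0 ∧ p1 ∈ J ∧ g p1 ≠ 0 ∧ q1 < p1 := by
    rcases lt_trichotomy q p with h | h | h
    · exact ⟨q, p, hq, hfq, hp, hgp, h⟩
    · exfalso; rcases hd q hq with h' | h'
      · exact hfq h'
      · rw [h] at h'; exact hgp h'
    · have hre := reflG q hq hfq rr hrrd p hp h
      refine ⟨q, q + rr * (q - p), hq, hfq,
        hray q hq (Set.mem_Ici.mpr (by nlinarith)), ?_, by nlinarith⟩
      intro h0
      rw [h0, mul_zero] at hre
      exact hgp hre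
  have hepos : 0 < p1 - q1 := sub_pos.mpr hlt1
  have hind : ∀ n : ℕ, ∃ q' p', q' ∈ J ∧ f q' ≠ 0 ∧ p' ∈ J ∧ g p' ≠ 0 ∧ q' < p' ∧
      p1 - q1 ≤ p' - q' ∧ q1 + n * (p1 - q1) ≤ q' := by
    intro n
    induction n with
    | zero => exact ⟨q1, p1, hq1J, hfq1, hp1J, hgp1, hlt1, le_refl _, by simp⟩
    | succ n ih =>
      obtain ⟨q', p', hq'J, hfq', hp'J, hgp', hlt', hgap, hpos⟩ := ih
      have hre := reflF p' hp'J hgp' rr hrrd q' hq'J hlt'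
      set q2 := p' + rr * (p' - q') with hq2def
      have hq2J : q2 ∈ J := hray p' hp'J (Set.mem_Ici.mpr (by nlinarith))
      have hfq2 : f q2 ≠ 0 := by
        intro h0; rw [h0, mul_zero] at hre; exact hfq' hre
      have hlt2 : p' < q2 := by rw [hq2def]; nlinarith
      have hre2 := reflG q2 hq2J hfq2 rr hrrd p' hp'J hlt2
      set p2 := q2 + rr * (q2 - p') with hp2def
      have hp2J : p2 ∈ J := hray q2 hq2J (Set.mem_Ici.mpr (by nlinarith))
      have hgp2 : g p2 ≠ 0 := by
        intro h0; rw [h0, mul_zero] at hre2; exact hgp' hre2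
      refine ⟨q2, p2, hq2J, hfq2, hp2J, hgp2, by rw [hp2def]; nlinarith, ?_, ?_⟩
      · rw [hp2def, hq2def]; nlinarith
      · push_cast
        rw [hq2def]; nlinarith
  have hUfU : ∀ M : ℝ, ∃ c, c ∈ J ∧ f c ≠ 0 ∧ M < c := by
    intro M
    obtain ⟨n, hn⟩ := exists_nat_gt ((M - q1) / (p1 - q1))
    obtain ⟨q', p', hq'J, hfq', _, _, _, _, hpos⟩ := hind n
    refine ⟨q', hq'J, hfq', ?_⟩
    have := (div_lt_iff₀ hepos).mp hn
    nlinarith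
  -- every point of U_f is an accumulation point of U_f
  have hacc : ∀ c ∈ J, f c ≠ 0 → ∀ δ : ℝ, 0 < δ →
      ∃ c', c' ∈ J ∧ f c' ≠ 0 ∧ c' ≠ c ∧ |c' - c| < δ := by
    intro c hc hfc δ hδ
    by_contra hcon
    push_neg at hcon
    obtain ⟨ρ, hρ, hball⟩ := Metric.isOpen_iff.mp hJo c hc
    set δ' := min δ ρ with hδ'def
    have hδ'pos : 0 < δ' := lt_min hδ hρ
    have hδ'δ : δ' ≤ δ := min_le_left _ _
    have hδ'ρ : δ' ≤ ρ := min_le_right _ _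
    have hball' : Set.Ioo (c - δ') (c + δ') ⊆ J := by
      intro w hw
      apply hball
      rw [Metric.mem_ball, Real.dist_eq, abs_lt]
      exact ⟨by nlinarith [hw.1], by nlinarith [hw.2]⟩
    have hf0 : ∀ w ∈ Set.Ioo (c - δ') (c + δ'), w ≠ c → f w = 0 := by
      intro w hw hne
      by_contra hfw
      have h1 := hcon w (hball' hw) hfw hne
      have h2 : |w - c| < δ' := by rw [abs_lt]; exact ⟨by linarith [hw.1], by linarith [hw.2]⟩
      linarith
    have hconstR : ∀ u v : ℝ, c < u → u ≤ v → v < c + δ' → F v = F u := by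
      intro u v hu huv hv
      have h1 : Set.Icc u v ⊆ Set.Ioo (c - δ') (c + δ') := by
        intro w hw; exact ⟨by linarith [hw.1], by linarith [hw.2]⟩
      exact constant_of_has_deriv_right_zero
        (fun w hw => ((hF w (hball' (h1 hw))).continuousAt).continuousWithinAt)
        (fun w hw => by
          have hw' : w ∈ Set.Icc u v := ⟨hw.1, hw.2.le⟩
          have h0 : f w = 0 := hf0 w (h1 hw') (by intro h; rw [h] at hw; linarith [hw.1])
          exact h0 ▸ (hF w (hball' (h1 hw'))).hasDerivWithinAt)
        v (Set.right_mem_Icc.mpr huv)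
    have hconstL : ∀ u v : ℝ, c - δ' < u → u ≤ v → v < c → F v = F u := by
      intro u v hu huv hv
      have h1 : Set.Icc u v ⊆ Set.Ioo (c - δ') (c + δ') := by
        intro w hw; exact ⟨by linarith [hw.1], by nlinarith [hw.2]⟩
      exact constant_of_has_deriv_right_zero
        (fun w hw => ((hF w (hball' (h1 hw))).continuousAt).continuousWithinAt)
        (fun w hw => by
          have hw' : w ∈ Set.Icc u v := ⟨hw.1, hw.2.le⟩
          have h0 : f w = 0 := hf0 w (h1 hw') (by intro h; rw [h] at hw; linarith [hw.2])
          exact h0 ▸ (hF w (hball' (h1 hw'))).hasDerivWithinAt)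
        v (Set.right_mem_Icc.mpr huv)
    have hR : ∀ w ∈ Set.Ioo c (c + δ'), F w = F c := by
      intro w hw
      have hcw : Filter.Tendsto F (nhdsWithin c (Set.Ioi c)) (nhds (F c)) :=
        (hF c hc).continuousAt.continuousWithinAt
      have hmem : Set.Ioo c w ∈ nhdsWithin c (Set.Ioi c) :=
        Ioo_mem_nhdsGT_of_mem ⟨le_refl c, hw.1⟩
      have hev : F =ᶠ[nhdsWithin c (Set.Ioi c)] (fun _ => F w) := by
        filter_upwards [hmem] with u hu
        exact (hconstR u w hu.1 hu.2.le hw.2).symm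
      have ht2 : Filter.Tendsto (fun _ : ℝ => F w) (nhdsWithin c (Set.Ioi c)) (nhds (F c)) :=
        hcw.congr' hev
      exact (tendsto_nhds_unique ht2 tendsto_const_nhds).symm
    have hL : ∀ w ∈ Set.Ioo (c - δ') c, F w = F c := by
      intro w hw
      have hcw : Filter.Tendsto F (nhdsWithin c (Set.Iio c)) (nhds (F c)) :=
        (hF c hc).continuousAt.continuousWithinAt
      have hmem : Set.Ioo w c ∈ nhdsWithin c (Set.Iio c) :=
        Ioo_mem_nhdsLT_of_mem ⟨hw.2, le_refl c⟩
      have hev : F =ᶠ[nhdsWithin c (Set.Iio c)] (fun _ => F w) := by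
        filter_upwards [hmem] with u hu
        exact hconstL w u hw.1 hu.1.le hu.2
      have ht2 : Filter.Tendsto (fun _ : ℝ => F w) (nhdsWithin c (Set.Iio c)) (nhds (F c)) :=
        hcw.congr' hev
      exact (tendsto_nhds_unique ht2 tendsto_const_nhds).symm
    have hev : F =ᶠ[nhds c] (fun _ => F c) := by
      filter_upwards [Ioo_mem_nhds (by linarith : c - δ' < c) (by linarith : c < c + δ')] with w hw
      rcases lt_trichotomy w c with h | h | h
      · exact hL w ⟨hw.1, h⟩
      · rw [h]
      · exact hR w ⟨h, hw.2⟩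
    have hd0 : HasDerivAt F 0 c := (hasDerivAt_const c (F c)).congr_of_eventuallyEq hev
    exact hfc (hd0.unique (hF c hc)).symm
  -- window constancy
  have hwin : ∀ qh ∈ J, f qh ≠ 0 → ∀ x ∈ J, x ≤ qh → ∀ y z : ℝ,
      qh + 1 ≤ y → y ≤ z → z ≤ qh + r * (qh - x) - 1 → G y = G z := by
    intro qh hqh hfqh x hx hxq y z hy hyz hz
    have hzJ : z ∈ J := hray qh hqh (Set.mem_Ici.mpr (by linarith))
    refine eq_of_forall_dist_le ?_
    intro ε hε
    obtain ⟨δ₁, hδ₁, hcont⟩ := Metric.continuousAt_iff.mp (hG z hzJ).continuousAt ε hε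
    have h1r : (0:ℝ) < 1 + r := by linarith
    set δ := min (1 / (1 + r)) (δ₁ / (2 * (1 + r))) with hδdef
    have hδpos : 0 < δ := lt_min (by positivity) (by positivity)
    have hδ1 : δ * (1 + r) ≤ 1 := by
      have := min_le_left (1 / (1 + r)) (δ₁ / (2 * (1 + r)))
      rw [← hδdef] at this
      calc δ * (1 + r) ≤ (1 / (1 + r)) * (1 + r) := by nlinarith
        _ = 1 := by field_simp
    have hδ2 : δ * (1 + r) < δ₁ := by
      have := min_le_right (1 / (1 + r)) (δ₁ / (2 * (1 + r)))
      rw [← hδdef] at this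
      calc δ * (1 + r) ≤ (δ₁ / (2 * (1 + r))) * (1 + r) := by nlinarith
        _ = δ₁ / 2 := by field_simp
        _ < δ₁ := by linarith
    obtain ⟨c', hc'J, hfc', hc'ne, hc'close⟩ := hacc qh hqh hfqh δ hδpos
    set c := min qh c' with hcdef
    set c₂ := max qh c' with hc₂def
    have hcJ : c ∈ J := by rcases min_choice qh c' with h | h <;> rw [hcdef, h] <;> assumption
    have hc₂J : c₂ ∈ J := by rcases max_choice qh c' with h | h <;> rw [hc₂def, h] <;> assumption
    have hfc : f c ≠ 0 := by rcases min_choice qh c' with h | h <;> rw [hcdef, h] <;> assumption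
    have hfc₂ : f c₂ ≠ 0 := by rcases max_choice qh c' with h | h <;> rw [hc₂def, h] <;> assumption
    have hcc2 : c < c₂ := min_lt_max.mpr (Ne.symm hc'ne)
    have habs := abs_lt.mp hc'close
    have hclow : qh - δ < c := by
      rcases min_choice qh c' with h | h <;> rw [hcdef, h] <;> linarith [habs.1]
    have hchigh : c ≤ qh := min_le_left _ _
    have hc₂low : qh ≤ c₂ := le_max_left _ _
    have hc₂high : c₂ < qh + δ := by
      rcases max_choice qh c' with h | h <;> rw [hc₂def, h] <;> linarith [habs.2]
    set τ := (1 + r) * (c₂ - c) with hτdef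
    have hτpos : 0 < τ := by rw [hτdef]; nlinarith
    have hτδ : τ < δ₁ := by
      have hcd : c₂ - c < δ := by
        rw [hc₂def, hcdef, max_sub_min_eq_abs]
        simpa [abs_sub_comm] using hc'close
      calc τ = (1 + r) * (c₂ - c) := hτdef
        _ ≤ (1 + r) * δ := by nlinarith
        _ = δ * (1 + r) := by ring
        _ < δ₁ := hδ2
    have hper : ∀ w : ℝ, c ≤ w → w ≤ c + r * (c - x) → G (w + τ) = G w := by
      intro w hw1 hw2
      set a := c - (w - c) / r with hadef
      have hax : x ≤ a := by
        rw [hadef]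
        have : (w - c) / r ≤ c - x := by
          rw [div_le_iff₀ hrpos]; nlinarith
        linarith
      have hac : a ≤ c := by
        rw [hadef]
        have : 0 ≤ (w - c) / r := div_nonneg (by linarith) hrpos.le
        linarith
      have haJ : a ∈ J := hJc.out hx hcJ ⟨hax, hac⟩
      have h1 : G (c + r * (c - a)) = G a := symG c hcJ hfc a haJ hac
      have h2 : G (c₂ + r * (c₂ - a)) = G a := symG c₂ hc₂J hfc₂ a haJ (by linarith)
      have e1 : c + r * (c - a) = w := by
        rw [hadef]; field_simp; ring
      have e2 : c₂ + r * (c₂ - a) = w + τ := by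
        rw [hadef, hτdef]; field_simp; ring
      rw [e1] at h1; rw [e2] at h2
      rw [h2, h1]
    have hstep : ∀ k : ℕ, y + k * τ ≤ z → G (y + k * τ) = G y := by
      intro k
      induction k with
      | zero => intro _; simp
      | succ k ih =>
        intro hk
        have hcast : ((k : ℝ) + 1) * τ = k * τ + τ := by ring
        have hk' : y + k * τ ≤ z := by push_cast at hk; nlinarith
        have hw1 : c ≤ y + k * τ := by
          have : (0:ℝ) ≤ k * τ := by positivity
          linarith
        have hw2 : y + k * τ ≤ c + r * (c - x) := by
          have key : qh + r * (qh - x) ≤ c + r * (c - x) + δ * (1 + r) := by nlinarith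
          linarith
        have := hper (y + k * τ) hw1 hw2
        have heqpt : y + ((k : ℕ) + 1 : ℕ) * τ = (y + k * τ) + τ := by push_cast; ring
        rw [heqpt, this]
        exact ih hk'
    set n := Nat.floor ((z - y) / τ) with hndef
    have hdiv_nonneg : 0 ≤ (z - y) / τ := div_nonneg (by linarith) hτpos.le
    have hn1 : (n : ℝ) * τ ≤ z - y := by
      have h := Nat.floor_le hdiv_nonneg
      rw [← hndef] at h
      calc (n : ℝ) * τ ≤ ((z - y) / τ) * τ := by nlinarith
        _ = z - y := by field_simp
    have hn2 : z - y < ((n : ℝ) + 1) * τ := by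
      have h := Nat.lt_floor_add_one ((z - y) / τ)
      rw [← hndef] at h
      have := (div_lt_iff₀ hτpos).mp h
      linarith
    have hGy : G (y + n * τ) = G y := hstep n (by linarith)
    have hdist : dist (y + n * τ) z < δ₁ := by
      rw [Real.dist_eq, abs_lt]
      constructor <;> nlinarith
    have hfin := hcont hdist
    rw [hGy] at hfin
    rw [dist_comm] at hfin ⊢
    exact hfin.le
  -- g vanishes strictly inside the windows
  have hzero : ∀ qh ∈ J, f qh ≠ 0 → ∀ x ∈ J, x ≤ qh → ∀ P : ℝ,
      qh + 1 < P → P < qh + r * (qh - x) - 1 → g P = 0 := by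
    intro qh hqh hfqh x hx hxq P h1 h2
    have hPJ : P ∈ J := hray qh hqh (Set.mem_Ici.mpr (by linarith))
    set η := min (P - (qh + 1)) (qh + r * (qh - x) - 1 - P) with hηdef
    have hηpos : 0 < η := lt_min (by linarith) (by linarith)
    have hη1 : η ≤ P - (qh + 1) := min_le_left _ _
    have hη2 : η ≤ qh + r * (qh - x) - 1 - P := min_le_right _ _
    have hconst : ∀ w : ℝ, |w - P| < η → G w = G P := by
      intro w hw
      rw [abs_lt] at hw
      rcases le_total w P with h | h
      · exact hwin qh hqh hfqh x hx hxq w P (by linarith) h (by linarith)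
      · exact (hwin qh hqh hfqh x hx hxq P w (by linarith) h (by linarith)).symm
    have hev : G =ᶠ[nhds P] (fun _ => G P) := by
      filter_upwards [Metric.ball_mem_nhds P hηpos] with w hw
      exact hconst w (by simpa [Real.dist_eq] using hw)
    have h0 : HasDerivAt G 0 P := (hasDerivAt_const P (G P)).congr_of_eventuallyEq hev
    exact (h0.unique (hG P hPJ)).symm
  -- final assembly
  have hrinv : 0 < 1 / r := by positivity
  obtain ⟨c₁, hc₁J, hfc₁, hc₁gt⟩ := hUfU (p + 1 / r + 1)
  have hpc₁ : p < c₁ := by linarith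
  set p₁ := c₁ + r * (c₁ - p) with hp₁def
  have hre := reflG c₁ hc₁J hfc₁ r (Or.inl rfl) p hp hpc₁
  have hp₁J : p₁ ∈ J := hray c₁ hc₁J (Set.mem_Ici.mpr (by nlinarith))
  have hgp₁ : g p₁ ≠ 0 := by
    intro h0; rw [hp₁def] at h0; rw [h0, mul_zero] at hre; exact hgp hre
  have hp₁p : p + 1 / r < p₁ := by
    rw [hp₁def]; nlinarith
  obtain ⟨qh, hqhJ, hfqh, hqhgt⟩ := hUfU (p₁ + 1 / r + 1)
  have hp₁qh : p₁ < qh := by linarith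
  set P := qh + r * (qh - p₁) with hPdef
  have hre2 := reflG qh hqhJ hfqh r (Or.inl rfl) p₁ hp₁J hp₁qh
  have hgP : g P ≠ 0 := by
    intro h0; rw [hPdef] at h0; rw [h0, mul_zero] at hre2; exact hgp₁ hre2
  have hxqh : p ≤ qh := by linarith
  have hP0 : g P = 0 := by
    refine hzero qh hqhJ hfqh p hp hxqh P ?_ ?_
    · rw [hPdef]
      have : r * (qh - p₁) > r * (1 / r) := by
        apply mul_lt_mul_of_pos_left _ hrpos
        linarith
      rw [mul_one_div, div_self hrpos.ne'] at this
      linarith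
    · rw [hPdef]
      have : r * (p₁ - p) > r * (1 / r) := by
        apply mul_lt_mul_of_pos_left _ hrpos
        linarith
      rw [mul_one_div, div_self hrpos.ne'] at this
      nlinarith
  exact hgP hP0

/-- Proposition 3.1 -/
theorem stmt_6 (J : Set ℝ) (hJo : IsOpen J) (hJc : J.OrdConnected) (hJne : J.Nonempty)
    (hJinf : ¬ BddBelow J ∨ ¬ BddAbove J)
    (α β : ℝ) (hα : α ∈ Set.Ioo (0:ℝ) 1) (hβ : β ∈ Set.Ioo (0:ℝ) 1) (hαβ : α + β = 1)
    (F G f g : ℝ → ℝ)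
    (hF : ∀ x ∈ J, HasDerivAt F (f x) x) (hG : ∀ x ∈ J, HasDerivAt G (g x) x)
    (heq : ∀ a ∈ J, ∀ b ∈ J,
      (F b - F a) * g (α * a + β * b) = (G b - G a) * f (α * a + β * b))
    (hUg : {x ∈ J | g x ≠ 0}.Nonempty)
    (hdisj : {x ∈ J | f x ≠ 0} ∩ {x ∈ J | g x ≠ 0} = ∅) :
    (∀ x ∈ J, f x = 0) ∧ ∃ c : ℝ, ∀ x ∈ J, F x = c := by
  obtain ⟨hα0, hα1⟩ := hα
  obtain ⟨hβ0, hβ1⟩ := hβ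
  obtain ⟨p, hp, hgp⟩ := hUg
  have hd : ∀ x ∈ J, f x = 0 ∨ g x = 0 := by
    intro x hx
    by_contra hcon
    push_neg at hcon
    have hmem : x ∈ {x ∈ J | f x ≠ 0} ∩ {x ∈ J | g x ≠ 0} :=
      ⟨⟨hx, hcon.1⟩, ⟨hx, hcon.2⟩⟩
    rw [hdisj] at hmem
    exact hmem
  have hf0 : ∀ x ∈ J, f x = 0 := by
    intro x hx
    by_contra hfx
    rcases hJinf with hbb | hba
    · -- unbounded below: reflect
      set J' : Set ℝ := (fun y : ℝ => -y) ⁻¹' J with hJ'def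
      have hJ'o : IsOpen J' := hJo.preimage (continuous_neg)
      have hJ'c : J'.OrdConnected := by
        refine ⟨fun u hu v hv w hw => ?_⟩
        have : -w ∈ Set.Icc (-v) (-u) := ⟨neg_le_neg hw.2, neg_le_neg hw.1⟩
        exact hJc.out hv hu this
      have hray' : ∀ t ∈ J', Set.Ici t ⊆ J' := by
        intro t ht u hu
        obtain ⟨w, hw, hwlt⟩ := not_bddBelow_iff.mp hbb (-u)
        have htu : -u ≤ -t := neg_le_neg hu
        exact hJc.out hw ht ⟨hwlt.le, htu⟩
      have hF' : ∀ y ∈ J', HasDerivAt (fun y : ℝ => F (-y)) (-f (-y)) y := by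
        intro y hy
        have h := (hF (-y) hy).comp y (hasDerivAt_neg' (x := y))
        exact h.congr_deriv (by ring)
      have hG' : ∀ y ∈ J', HasDerivAt (fun y : ℝ => G (-y)) (-g (-y)) y := by
        intro y hy
        have h := (hG (-y) hy).comp y (hasDerivAt_neg' (x := y))
        exact h.congr_deriv (by ring)
      have heq' : ∀ a ∈ J', ∀ b ∈ J',
          ((fun y : ℝ => F (-y)) b - (fun y : ℝ => F (-y)) a) *
            (fun y : ℝ => -g (-y)) (β * a + α * b) =
          ((fun y : ℝ => G (-y)) b - (fun y : ℝ => G (-y)) a) *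
            (fun y : ℝ => -f (-y)) (β * a + α * b) := by
        intro a ha b hb
        have h := heq (-b) hb (-a) ha
        have hm : α * (-b) + β * (-a) = -(β * a + α * b) := by ring
        rw [hm] at h
        simp only
        linear_combination h
      have hd' : ∀ y ∈ J', (fun y : ℝ => -f (-y)) y = 0 ∨ (fun y : ℝ => -g (-y)) y = 0 := by
        intro y hy
        rcases hd (-y) hy with h | h
        · left; simp [h]
        · right; simp [h]
      refine core J' hJ'o hJ'c hray' β α hβ0 hα0 (by linarith)
        (fun y : ℝ => F (-y)) (fun y : ℝ => G (-y))
        (fun y : ℝ => -f (-y)) (fun y : ℝ => -g (-y))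
        hF' hG' heq' hd' (-p) (by rw [hJ'def]; simpa using hp) (by simpa using hgp)
        (-x) (by rw [hJ'def]; simpa using hx) (by simpa using hfx)
    · -- unbounded above
      have hray : ∀ t ∈ J, Set.Ici t ⊆ J := by
        intro t ht u hu
        obtain ⟨w, hw, hwlt⟩ := not_bddAbove_iff.mp hba u
        exact hJc.out ht hw ⟨hu, hwlt.le⟩
      exact core J hJo hJc hray α β hα0 hβ0 hαβ F G f g hF hG heq hd p hp hgp x hx hfx
  refine ⟨hf0, ?_⟩
  obtain ⟨x₀, hx₀⟩ := hJne
  refine ⟨F x₀, ?_⟩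
  have hconst : ∀ u v : ℝ, u ∈ J → v ∈ J → u ≤ v → F v = F u := by
    intro u v hu hv huv
    have hsub : Set.Icc u v ⊆ J := hJc.out hu hv
    exact constant_of_has_deriv_right_zero
      (fun w hw => ((hF w (hsub hw)).continuousAt).continuousWithinAt)
      (fun w hw => by
        have hw' : w ∈ Set.Icc u v := ⟨hw.1, hw.2.le⟩
        have h0 : f w = 0 := hf0 w (hsub hw')
        exact h0 ▸ (hF w (hsub hw')).hasDerivWithinAt)
      v (Set.right_mem_Icc.mpr huv)
  intro x hx
  rcases le_total x x₀ with h | h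
  · exact (hconst x x₀ hx hx₀ h).symm
  · exact hconst x₀ x hx₀ hx h
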